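/- Let G be a graph that is vertex-minimal subject to: G is planar, subcubic, contains no cycles of length 4 through 8, and G^2 is not 6-choosable. Then no two vertices of degree 2 in G are adjacent. -/

import Mathlib

open SimpleGraph

variable {V : Type*}

/-- The square of a graph: join two distinct vertices at distance at most 2. -/
def SimpleGraph.square (G : SimpleGraph V) : SimpleGraph V where
  Adj u v := u ≠ v ∧ (G.Adj u v ∨ ∃ w, G.Adj u w ∧ G.Adj w v)
  symm := by
    constructor
    rintro u v ⟨hne, h | ⟨w, hw1, hw2⟩⟩
    · exact ⟨hne.symm, Or.inl h.symm⟩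
    · exact ⟨hne.symm, Or.inr ⟨w, hw2.symm, hw1.symm⟩⟩
  loopless := ⟨fun v h => h.1 rfl⟩

/-- `k`-choosability: every list assignment with lists of size at least `k`
admits a proper coloring from the lists. -/
def SimpleGraph.Choosable (G : SimpleGraph V) (k : ℕ) : Prop :=
  ∀ L : V → Finset ℕ, (∀ v, k ≤ (L v).card) →
    ∃ f : V → ℕ, (∀ v, f v ∈ L v) ∧ ∀ u v, G.Adj u v → f u ≠ f v

/-- `H` is a minor of `G`: there are nonempty, pairwise disjoint, connected branch
sets in `G` realizing the adjacencies of `H`. -/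
def SimpleGraph.HasMinor {W : Type*} (G : SimpleGraph V) (H : SimpleGraph W) : Prop :=
  ∃ f : W → Set V,
    (∀ w, (f w).Nonempty) ∧
    (∀ w, (G.induce (f w)).Connected) ∧
    (∀ w₁ w₂, w₁ ≠ w₂ → Disjoint (f w₁) (f w₂)) ∧
    (∀ w₁ w₂, H.Adj w₁ w₂ → ∃ a ∈ f w₁, ∃ b ∈ f w₂, G.Adj a b)

/-- Planarity via Wagner's theorem: no `K₅` minor and no `K₃,₃` minor. -/
def SimpleGraph.Planar (G : SimpleGraph V) : Prop :=
  ¬ G.HasMinor (completeGraph (Fin 5)) ∧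
    ¬ G.HasMinor (completeBipartiteGraph (Fin 3) (Fin 3))

/-- `G` contains no cycles of length 4 through 8. -/
def SimpleGraph.NoCycle4To8 (G : SimpleGraph V) : Prop :=
  ∀ (v : V) (c : G.Walk v v), c.IsCycle → ¬ (4 ≤ c.length ∧ c.length ≤ 8)

/-- Claim 3.1(3): in a vertex-minimal subcubic planar graph with no 4- to 8-cycles whose
square is not 6-choosable (minimality: deleting any nonempty set of vertices yields an
induced subgraph whose square is 6-choosable), no two vertices of degree 2 are adjacent. -/
theorem min_counterexample_no_adjacent_two_vertices
    [Fintype V] [DecidableEq V] (G : SimpleGraph V) [DecidableRel G.Adj]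
    (hplanar : G.Planar)
    (hsubcubic : ∀ v, G.degree v ≤ 3)
    (hcycles : G.NoCycle4To8)
    (hnot : ¬ G.square.Choosable 6)
    (hmin : ∀ s : Set V, s ≠ Set.univ → ((G.induce s).square).Choosable 6) :
    ¬ ∃ x y : V, G.degree x = 2 ∧ G.degree y = 2 ∧ G.Adj x y := by
  classical
  rintro ⟨x, y, hdx, hdy, hxy⟩
  have hne : x ≠ y := G.ne_of_adj hxy
  -- the other neighbor of x
  obtain ⟨x1, hx1y, hNx⟩ : ∃ w, w ≠ y ∧ G.neighborFinset x = {y, w} := by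
    obtain ⟨a, b, hab, hN⟩ := Finset.card_eq_two.mp hdx
    have hyN : y ∈ G.neighborFinset x := by simpa using hxy
    rw [hN, Finset.mem_insert, Finset.mem_singleton] at hyN
    rcases hyN with rfl | rfl
    · exact ⟨b, fun e => hab e.symm, hN⟩
    · exact ⟨a, hab, by rw [hN, Finset.pair_comm]⟩
  -- the other neighbor of y
  obtain ⟨y1, hy1x, hNy⟩ : ∃ w, w ≠ x ∧ G.neighborFinset y = {x, w} := by
    obtain ⟨a, b, hab, hN⟩ := Finset.card_eq_two.mp hdy
    have hyN : x ∈ G.neighborFinset y := by simpa using hxy.symm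
    rw [hN, Finset.mem_insert, Finset.mem_singleton] at hyN
    rcases hyN with rfl | rfl
    · exact ⟨b, fun e => hab e.symm, hN⟩
    · exact ⟨a, hab, by rw [hN, Finset.pair_comm]⟩
  have hxx1 : G.Adj x x1 := by
    rw [← SimpleGraph.mem_neighborFinset, hNx]; simp
  have hyy1 : G.Adj y y1 := by
    rw [← SimpleGraph.mem_neighborFinset, hNy]; simp
  set s : Set V := {v | v ≠ x ∧ v ≠ y} with hsdef
  have hsne : s ≠ Set.univ := by
    intro h
    have hx : x ∈ s := h.symm ▸ Set.mem_univ x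
    exact hx.1 rfl
  apply hnot
  intro L hL
  obtain ⟨g, hg1, hg2⟩ := hmin s hsne (fun v => L v.1) (fun v => hL v.1)
  -- extend g arbitrarily to all of V
  set h : V → ℕ := fun v => if hc : v ≠ x ∧ v ≠ y then g ⟨v, hc⟩ else 0 with hhdef
  set Sx : Finset V :=
    (G.neighborFinset y).erase x ∪ (G.neighborFinset x1).erase x ∪ {x1} with hSxdef
  set Sy : Finset V :=
    (G.neighborFinset x).erase y ∪ (G.neighborFinset y1).erase y ∪ {y1} with hSydef
  have hxNy : x ∈ G.neighborFinset y := by simpa using hxy.symm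
  have hyNx : y ∈ G.neighborFinset x := by simpa using hxy
  have hxNx1 : x ∈ G.neighborFinset x1 := by simpa using hxx1.symm
  have hyNy1 : y ∈ G.neighborFinset y1 := by simpa using hyy1.symm
  have hSxcard : Sx.card ≤ 4 := by
    have h1 : ((G.neighborFinset y).erase x).card = 1 := by
      rw [Finset.card_erase_of_mem hxNy]
      simp [hdy]
    have h2 : ((G.neighborFinset x1).erase x).card ≤ 2 := by
      rw [Finset.card_erase_of_mem hxNx1]
      have h3 := hsubcubic x1
      have h4 : (G.neighborFinset x1).card = G.degree x1 :=
        G.card_neighborFinset_eq_degree x1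
      omega
    calc Sx.card ≤ ((G.neighborFinset y).erase x ∪ (G.neighborFinset x1).erase x).card
        + ({x1} : Finset V).card := Finset.card_union_le _ _
      _ ≤ ((G.neighborFinset y).erase x).card + ((G.neighborFinset x1).erase x).card + 1 := by
          have := Finset.card_union_le ((G.neighborFinset y).erase x)
            ((G.neighborFinset x1).erase x)
          simp only [Finset.card_singleton]
          omega
      _ ≤ 4 := by omega
  have hSycard : Sy.card ≤ 4 := by
    have h1 : ((G.neighborFinset x).erase y).card = 1 := by
      rw [Finset.card_erase_of_mem hyNx]
      simp [hdx]
    have h2 : ((G.neighborFinset y1).erase y).card ≤ 2 := by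
      rw [Finset.card_erase_of_mem hyNy1]
      have h3 := hsubcubic y1
      have h4 : (G.neighborFinset y1).card = G.degree y1 :=
        G.card_neighborFinset_eq_degree y1
      omega
    calc Sy.card ≤ ((G.neighborFinset x).erase y ∪ (G.neighborFinset y1).erase y).card
        + ({y1} : Finset V).card := Finset.card_union_le _ _
      _ ≤ ((G.neighborFinset x).erase y).card + ((G.neighborFinset y1).erase y).card + 1 := by
          have := Finset.card_union_le ((G.neighborFinset x).erase y)
            ((G.neighborFinset y1).erase y)
          simp only [Finset.card_singleton]
          omega
      _ ≤ 4 := by omega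
  -- square-neighbors of x avoiding x, y land in Sx
  have keyx : ∀ z, z ≠ x → z ≠ y → G.square.Adj x z → z ∈ Sx := by
    rintro z hzx hzy ⟨_, hadj | ⟨w, hw1, hw2⟩⟩
    · have hz : z ∈ G.neighborFinset x := by simpa using hadj
      rw [hNx, Finset.mem_insert, Finset.mem_singleton] at hz
      rcases hz with rfl | rfl
      · exact absurd rfl hzy
      · simp [hSxdef]
    · have hw : w ∈ G.neighborFinset x := by simpa using hw1
      rw [hNx, Finset.mem_insert, Finset.mem_singleton] at hw
      rcases hw with rfl | rfl
      · have : z ∈ (G.neighborFinset w).erase x :=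
          Finset.mem_erase.mpr ⟨hzx, by simpa using hw2⟩
        simp only [hSxdef, Finset.mem_union]
        exact Or.inl (Or.inl this)
      · have : z ∈ (G.neighborFinset w).erase x :=
          Finset.mem_erase.mpr ⟨hzx, by simpa using hw2⟩
        simp only [hSxdef, Finset.mem_union]
        exact Or.inl (Or.inr this)
  have keyy : ∀ z, z ≠ x → z ≠ y → G.square.Adj y z → z ∈ Sy := by
    rintro z hzx hzy ⟨_, hadj | ⟨w, hw1, hw2⟩⟩
    · have hz : z ∈ G.neighborFinset y := by simpa using hadj
      rw [hNy, Finset.mem_insert, Finset.mem_singleton] at hz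
      rcases hz with rfl | rfl
      · exact absurd rfl hzx
      · simp [hSydef]
    · have hw : w ∈ G.neighborFinset y := by simpa using hw1
      rw [hNy, Finset.mem_insert, Finset.mem_singleton] at hw
      rcases hw with rfl | rfl
      · have : z ∈ (G.neighborFinset w).erase y :=
          Finset.mem_erase.mpr ⟨hzy, by simpa using hw2⟩
        simp only [hSydef, Finset.mem_union]
        exact Or.inl (Or.inl this)
      · have : z ∈ (G.neighborFinset w).erase y :=
          Finset.mem_erase.mpr ⟨hzy, by simpa using hw2⟩
        simp only [hSydef, Finset.mem_union]
        exact Or.inl (Or.inr this)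
  -- choose a color for y
  obtain ⟨cy, hcyL, hcyF⟩ : ∃ c, c ∈ L y ∧ c ∉ Sy.image h := by
    have hnonempty : (L y \ Sy.image h).Nonempty := by
      rw [Finset.sdiff_nonempty]
      intro hsub
      have h1 := (hL y).trans (Finset.card_le_card hsub)
      have h2 := (Finset.card_image_le (s := Sy) (f := h)).trans hSycard
      omega
    obtain ⟨c, hc⟩ := hnonempty
    exact ⟨c, (Finset.mem_sdiff.mp hc).1, (Finset.mem_sdiff.mp hc).2⟩
  -- choose a color for x
  obtain ⟨cx, hcxL, hcxF⟩ : ∃ c, c ∈ L x ∧ c ∉ insert cy (Sx.image h) := by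
    have hnonempty : (L x \ insert cy (Sx.image h)).Nonempty := by
      rw [Finset.sdiff_nonempty]
      intro hsub
      have h1 := (hL x).trans (Finset.card_le_card hsub)
      have h2 := (Finset.card_image_le (s := Sx) (f := h)).trans hSxcard
      have h3 := Finset.card_insert_le cy (Sx.image h)
      omega
    obtain ⟨c, hc⟩ := hnonempty
    exact ⟨c, (Finset.mem_sdiff.mp hc).1, (Finset.mem_sdiff.mp hc).2⟩
  have hcxcy : cx ≠ cy := fun e => hcxF (by rw [e]; exact Finset.mem_insert_self _ _)
  have hcxS : ∀ z ∈ Sx, cx ≠ h z := by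
    intro z hz e
    exact hcxF (Finset.mem_insert.mpr (Or.inr (Finset.mem_image.mpr ⟨z, hz, e.symm⟩)))
  have hcyS : ∀ z ∈ Sy, cy ≠ h z := by
    intro z hz e
    exact hcyF (Finset.mem_image.mpr ⟨z, hz, e.symm⟩)
  -- two interior vertices get different colors
  have hint : ∀ (u v : V) (hu : u ≠ x ∧ u ≠ y) (hv : v ≠ x ∧ v ≠ y),
      G.square.Adj u v → g ⟨u, hu⟩ ≠ g ⟨v, hv⟩ := by
    rintro u v hu hv ⟨huv, hadj | ⟨w, hw1, hw2⟩⟩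
    · exact hg2 _ _ ⟨fun e => huv (congrArg Subtype.val e), Or.inl hadj⟩
    · by_cases hw : w ≠ x ∧ w ≠ y
      · exact hg2 _ _ ⟨fun e => huv (congrArg Subtype.val e),
          Or.inr ⟨⟨w, hw⟩, hw1, hw2⟩⟩
      · exfalso
        rcases not_and_or.mp hw with hwx | hwy
        · have hwx' : w = x := not_not.mp hwx
          subst hwx'
          have hu' : u ∈ G.neighborFinset w := by simpa using hw1.symm
          have hv' : v ∈ G.neighborFinset w := by simpa using hw2
          rw [hNx, Finset.mem_insert, Finset.mem_singleton] at hu' hv'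
          rcases hu' with rfl | rfl
          · exact hu.2 rfl
          · rcases hv' with rfl | h'
            · exact hv.2 rfl
            · exact huv h'.symm
        · have hwy' : w = y := not_not.mp hwy
          subst hwy'
          have hu' : u ∈ G.neighborFinset w := by simpa using hw1.symm
          have hv' : v ∈ G.neighborFinset w := by simpa using hw2
          rw [hNy, Finset.mem_insert, Finset.mem_singleton] at hu' hv'
          rcases hu' with rfl | rfl
          · exact hu.1 rfl
          · rcases hv' with rfl | h'
            · exact hv.1 rfl
            · exact huv h'.symm
  -- the final coloring
  refine ⟨fun v => if v = x then cx else if v = y then cy else h v, ?_, ?_⟩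
  · intro v
    by_cases hvx : v = x
    · subst hvx; simpa using hcxL
    · by_cases hvy : v = y
      · subst hvy; simp [hvx, hcyL]
      · simp only [if_neg hvx, if_neg hvy, hhdef]
        rw [dif_pos ⟨hvx, hvy⟩]
        exact hg1 ⟨v, hvx, hvy⟩
  · intro u v hadj
    show (if u = x then cx else if u = y then cy else h u) ≠
      (if v = x then cx else if v = y then cy else h v)
    have hune : u ≠ v := hadj.1
    by_cases hux : u = x
    · by_cases hvy : v = y
      · have hvx : v ≠ x := by rw [hvy]; exact Ne.symm hne
        rw [if_pos hux, if_neg hvx, if_pos hvy]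
        exact hcxcy
      · have hvx : v ≠ x := by rw [← hux]; exact hune.symm
        have hv : v ∈ Sx := keyx v hvx hvy (hux ▸ hadj)
        rw [if_pos hux, if_neg hvx, if_neg hvy]
        exact hcxS v hv
    · by_cases huy : u = y
      · by_cases hvx : v = x
        · rw [if_neg hux, if_pos huy, if_pos hvx]
          exact hcxcy.symm
        · have hvy : v ≠ y := by rw [← huy]; exact hune.symm
          have hv : v ∈ Sy := keyy v hvx hvy (huy ▸ hadj)
          rw [if_neg hux, if_pos huy, if_neg hvx, if_neg hvy]
          exact hcyS v hv
      · by_cases hvx : v = x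
        · have hu : u ∈ Sx := keyx u hux huy (hvx ▸ hadj.symm)
          rw [if_neg hux, if_neg huy, if_pos hvx]
          exact (hcxS u hu).symm
        · by_cases hvy : v = y
          · have hu : u ∈ Sy := keyy u hux huy (hvy ▸ hadj.symm)
            rw [if_neg hux, if_neg huy, if_neg hvx, if_pos hvy]
            exact (hcyS u hu).symm
          · rw [if_neg hux, if_neg huy, if_neg hvx, if_neg hvy]
            simp only [hhdef]
            rw [dif_pos (⟨hux, huy⟩ : u ≠ x ∧ u ≠ y), dif_pos (⟨hvx, hvy⟩ : v ≠ x ∧ v ≠ y)]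
            exact hint u v ⟨hux, huy⟩ ⟨hvx, hvy⟩ hadj
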